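/- For even n ≥ 4, the function g₂(a) = Σ_{k=1}^{n} cos θ_k/(1+a² − 2a·cos θ_k)^{3/2}, with θ_k = (2k−1)π/n, is strictly decreasing on (1, ∞). -/

import Mathlib

set_option maxHeartbeats 1000000


open Real Finset

private lemma keypoly {a c : ℝ} (ha : 1 < a) (hc0 : 0 < c) (hc1 : c < 1) :
    (a+c)^2*(1+a^2-2*a*c)^5 < (a-c)^2*(1+a^2+2*a*c)^5 := by
  have hE : 0 < a^2 - 1 := by nlinarith
  have hD0 : 0 < 1 - c^2 := by nlinarith
  have hD1 : 1 - c^2 < 1 := by nlinarith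
  have hid : (a-c)^2*(1+a^2+2*a*c)^5 - (a+c)^2*(1+a^2-2*a*c)^5
      = 4*a*c*(16*(1-c^2)^2*(4-(1-c^2)) + 128*((a^2-1)*(1-c^2))
        + 32*(a^2-1)*(1-c^2)^2*(2-(1-c^2)) + 64*(a^2-1)^2
        + 8*(a^2-1)^2*(1-c^2)*(22-3*(1-c^2)-2*(1-c^2)^2) + 96*(a^2-1)^3
        + 24*(a^2-1)^3*(1-c^2)*(2-(1-c^2)) + 5*(a^2-1)^4*(8-(1-c^2))
        + 4*(a^2-1)^5) := by ring
  have g1 : 0 < 16*(1-c^2)^2*(4-(1-c^2)) :=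
    mul_pos (mul_pos (by norm_num) (pow_pos hD0 2)) (by linarith)
  have g2 : 0 < 128*((a^2-1)*(1-c^2)) := by positivity
  have g3 : 0 < 32*(a^2-1)*(1-c^2)^2*(2-(1-c^2)) :=
    mul_pos (mul_pos (mul_pos (by norm_num) hE) (pow_pos hD0 2)) (by linarith)
  have g4 : 0 < 64*(a^2-1)^2 := by positivity
  have g5 : 0 < 8*(a^2-1)^2*(1-c^2)*(22-3*(1-c^2)-2*(1-c^2)^2) := by
    have h22 : 0 < 22-3*(1-c^2)-2*(1-c^2)^2 := by nlinarith
    exact mul_pos (mul_pos (mul_pos (by norm_num) (pow_pos hE 2)) hD0) h22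
  have g6 : 0 < 96*(a^2-1)^3 := by positivity
  have g7 : 0 < 24*(a^2-1)^3*(1-c^2)*(2-(1-c^2)) :=
    mul_pos (mul_pos (mul_pos (by norm_num) (pow_pos hE 3)) hD0) (by linarith)
  have g8 : 0 < 5*(a^2-1)^4*(8-(1-c^2)) :=
    mul_pos (mul_pos (by norm_num) (pow_pos hE 4)) (by linarith)
  have g9 : 0 < 4*(a^2-1)^5 := by positivity
  have hbr : 0 < 16*(1-c^2)^2*(4-(1-c^2)) + 128*((a^2-1)*(1-c^2))
        + 32*(a^2-1)*(1-c^2)^2*(2-(1-c^2)) + 64*(a^2-1)^2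
        + 8*(a^2-1)^2*(1-c^2)*(22-3*(1-c^2)-2*(1-c^2)^2) + 96*(a^2-1)^3
        + 24*(a^2-1)^3*(1-c^2)*(2-(1-c^2)) + 5*(a^2-1)^4*(8-(1-c^2))
        + 4*(a^2-1)^5 := by linarith
  have hfin : 0 < 4*a*c*(16*(1-c^2)^2*(4-(1-c^2)) + 128*((a^2-1)*(1-c^2))
        + 32*(a^2-1)*(1-c^2)^2*(2-(1-c^2)) + 64*(a^2-1)^2
        + 8*(a^2-1)^2*(1-c^2)*(22-3*(1-c^2)-2*(1-c^2)^2) + 96*(a^2-1)^3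
        + 24*(a^2-1)^3*(1-c^2)*(2-(1-c^2)) + 5*(a^2-1)^4*(8-(1-c^2))
        + 4*(a^2-1)^5) :=
    mul_pos (mul_pos (by linarith : (0:ℝ) < 4*a) hc0) hbr
  linarith

private lemma keyineq {a c : ℝ} (ha : 1 < a) (hc0 : 0 < c) (hc1 : c < 1) :
    3*c*(a+c)*Real.sqrt (1+a^2+2*a*c) / (1+a^2+2*a*c)^3
      < 3*c*(a-c)*Real.sqrt (1+a^2-2*a*c) / (1+a^2-2*a*c)^3 := by
  have hX : 0 < 1+a^2-2*a*c := by
    nlinarith [sq_nonneg (a-c), mul_pos (show (0:ℝ) < 1-c by linarith)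
      (show (0:ℝ) < 1+c by linarith)]
  have hY : 0 < 1+a^2+2*a*c := by
    nlinarith [mul_pos (show (0:ℝ) < a by linarith) hc0]
  have hsX : Real.sqrt (1+a^2-2*a*c) ^ 2 = 1+a^2-2*a*c := Real.sq_sqrt hX.le
  have hsY : Real.sqrt (1+a^2+2*a*c) ^ 2 = 1+a^2+2*a*c := Real.sq_sqrt hY.le
  have hX0 : 0 < Real.sqrt (1+a^2-2*a*c) := Real.sqrt_pos.mpr hX
  have hY0 : 0 < Real.sqrt (1+a^2+2*a*c) := Real.sqrt_pos.mpr hY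
  have hac : 0 < a - c := by linarith
  have hp := keypoly ha hc0 hc1
  have hu : ((a+c)*Real.sqrt (1+a^2+2*a*c)*(1+a^2-2*a*c)^3)^2
      < ((a-c)*Real.sqrt (1+a^2-2*a*c)*(1+a^2+2*a*c)^3)^2 := by
    have e1 : ((a+c)*Real.sqrt (1+a^2+2*a*c)*(1+a^2-2*a*c)^3)^2
        = (a+c)^2*(1+a^2+2*a*c)*(1+a^2-2*a*c)^6 := by
      rw [mul_pow, mul_pow, hsY]; ring
    have e2 : ((a-c)*Real.sqrt (1+a^2-2*a*c)*(1+a^2+2*a*c)^3)^2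
        = (a-c)^2*(1+a^2-2*a*c)*(1+a^2+2*a*c)^6 := by
      rw [mul_pow, mul_pow, hsX]; ring
    rw [e1, e2]
    nlinarith [mul_pos hX hY, hp]
  have hlt : (a+c)*Real.sqrt (1+a^2+2*a*c)*(1+a^2-2*a*c)^3
      < (a-c)*Real.sqrt (1+a^2-2*a*c)*(1+a^2+2*a*c)^3 :=
    lt_of_pow_lt_pow_left₀ 2
      (mul_nonneg (mul_nonneg hac.le hX0.le) (pow_pos hY 3).le) hu
  rw [div_lt_div_iff₀ (pow_pos hY 3) (pow_pos hX 3)]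
  nlinarith [mul_lt_mul_of_pos_left hlt (show (0:ℝ) < 3*c by linarith)]

private lemma pairq_strict {a c : ℝ} (ha : 1 < a) (hc0 : 0 < c) (hc1 : c < 1) :
    0 < 3*c*(a-c)*Real.sqrt (1+a^2-2*a*c) / (1+a^2-2*a*c)^3
      + 3*(-c)*(a - -c)*Real.sqrt (1+a^2-2*a*(-c)) / (1+a^2-2*a*(-c))^3 := by
  have e : 1+a^2-2*a*(-c) = 1+a^2+2*a*c := by ring
  rw [e]
  have h := keyineq ha hc0 hc1
  have e2 : 3*(-c)*(a - -c)*Real.sqrt (1+a^2+2*a*c)/(1+a^2+2*a*c)^3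
      = -(3*c*(a+c)*Real.sqrt (1+a^2+2*a*c)/(1+a^2+2*a*c)^3) := by ring
  rw [e2]; linarith

private lemma pairq {a c : ℝ} (ha : 1 < a) (hc : c^2 < 1) :
    0 ≤ 3*c*(a-c)*Real.sqrt (1+a^2-2*a*c) / (1+a^2-2*a*c)^3
      + 3*(-c)*(a - -c)*Real.sqrt (1+a^2-2*a*(-c)) / (1+a^2-2*a*(-c))^3 := by
  rcases lt_trichotomy c 0 with h | h | h
  · have h1 : 0 < -c := by linarith
    have h2 : -c < 1 := by nlinarith
    have key := pairq_strict ha h1 h2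
    have e1 : 1+a^2-2*a*(-c) = 1+a^2+2*a*c := by ring
    have e2 : 1+a^2-2*a*(- -c) = 1+a^2-2*a*c := by ring
    rw [e1, e2] at key
    rw [e1]
    simp only [neg_neg] at key
    linarith [key]
  · subst h; simp
  · have hc1 : c < 1 := by nlinarith
    exact (pairq_strict ha h hc1).le

private lemma cos_sq_lt {n k : ℕ} (hn : 4 ≤ n) (hev : Even n) (hk : k < n) :
    (Real.cos ((2*(k:ℝ)+1) * Real.pi / n))^2 < 1 := by
  have hn0 : (0:ℝ) < n := by exact_mod_cast (by omega : 0 < n)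
  set θ := (2*(k:ℝ)+1) * Real.pi / n with hθdef
  have hθ0 : 0 < θ := by
    apply div_pos _ hn0
    have : (0:ℝ) ≤ (k:ℝ) := Nat.cast_nonneg k
    nlinarith [Real.pi_pos]
  have hθ2 : θ < 2*Real.pi := by
    rw [hθdef, div_lt_iff₀ hn0]
    have hcast : (2*(k:ℝ)+1) < 2*(n:ℝ) := by exact_mod_cast (by omega : 2*k+1 < 2*n)
    nlinarith [Real.pi_pos]
  have hθπ : θ ≠ Real.pi := by
    intro h
    rw [hθdef] at h
    have h' : (2*(k:ℝ)+1)*Real.pi = Real.pi*n := by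
      field_simp at h; rw [h]; ring
    have h'' : (2*(k:ℝ)+1) = (n:ℝ) :=
      mul_right_cancel₀ Real.pi_ne_zero (by linarith)
    have hnat : 2*k+1 = n := by exact_mod_cast h''
    obtain ⟨j, hj⟩ := hev
    omega
  rcases lt_trichotomy θ Real.pi with h | h | h
  · have hs := Real.sin_pos_of_pos_of_lt_pi hθ0 h
    nlinarith [Real.sin_sq_add_cos_sq θ, hs]
  · exact absurd h hθπ
  · have hs : 0 < Real.sin (θ - Real.pi) :=
      Real.sin_pos_of_pos_of_lt_pi (by linarith) (by linarith)
    have h2 : Real.sin (θ - Real.pi + Real.pi) = -Real.sin (θ - Real.pi) :=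
      Real.sin_add_pi _
    have h3 : θ - Real.pi + Real.pi = θ := by ring
    rw [h3] at h2
    nlinarith [Real.sin_sq_add_cos_sq θ, hs, h2]

private lemma hasDerivAt_term (c : ℝ) (hc : c^2 < 1) (a : ℝ) :
    HasDerivAt (fun x : ℝ => c / (1 + x^2 - 2*x*c) ^ ((3:ℝ)/2))
      (-(3*c*(a-c)*Real.sqrt (1+a^2-2*a*c)) / (1+a^2-2*a*c)^3) a := by
  have hD : 0 < 1 + a^2 - 2*a*c := by nlinarith [sq_nonneg (a-c)]
  have h1 : HasDerivAt (fun x : ℝ => 1 + x^2 - 2*x*c) (2*a - 2*c) a := by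
    have h1a : HasDerivAt (fun x : ℝ => 1 + x^2) (2*a) a := by
      simpa using (hasDerivAt_pow 2 a).const_add 1
    have h1b : HasDerivAt (fun x : ℝ => 2*x*c) (2*c) a := by
      simpa using ((hasDerivAt_id a).const_mul 2).mul_const c
    exact h1a.fun_sub h1b
  have h2 : HasDerivAt (fun x : ℝ => (1 + x^2 - 2*x*c) ^ ((3:ℝ)/2))
      ((2*a-2*c) * ((3:ℝ)/2) * (1+a^2-2*a*c) ^ ((3:ℝ)/2 - 1)) a :=
    h1.rpow_const (Or.inl hD.ne')
  have h3 := (hasDerivAt_const a c).fun_div h2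
    (show (1+a^2-2*a*c) ^ ((3:ℝ)/2) ≠ 0 from (Real.rpow_pos_of_pos hD _).ne')
  refine h3.congr_deriv ?_
  have e1 : (1+a^2-2*a*c) ^ ((3:ℝ)/2 - 1) = Real.sqrt (1+a^2-2*a*c) := by
    rw [Real.sqrt_eq_rpow]; norm_num
  have e2 : ((1+a^2-2*a*c) ^ ((3:ℝ)/2))^2 = (1+a^2-2*a*c)^3 := by
    rw [← Real.rpow_natCast ((1+a^2-2*a*c) ^ ((3:ℝ)/2)) 2, ← Real.rpow_mul hD.le,
      show ((3:ℝ)/2 * (2:ℕ)) = ((3:ℕ):ℝ) by norm_num, Real.rpow_natCast]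
  rw [e1, e2]
  ring

theorem stmt_13 (n : ℕ) (hn : 4 ≤ n) (hev : Even n) :
    StrictAntiOn (fun a : ℝ => ∑ k ∈ Finset.range n,
        Real.cos ((2*(k : ℝ)+1) * Real.pi / n) /
          (1 + a^2 - 2*a*Real.cos ((2*(k : ℝ)+1) * Real.pi / n)) ^ ((3:ℝ)/2))
      (Set.Ioi 1) := by
  obtain ⟨m, hm⟩ := hev
  subst hm
  have hm2 : 2 ≤ m := by omega
  have hcsq : ∀ k : ℕ, k < m + m →
      (Real.cos ((2*(k:ℝ)+1) * Real.pi / (↑(m+m))))^2 < 1 :=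
    fun k hk => cos_sq_lt hn ⟨m, rfl⟩ hk
  have hder : ∀ a : ℝ, HasDerivAt (fun a : ℝ => ∑ k ∈ Finset.range (m+m),
      Real.cos ((2*(k : ℝ)+1) * Real.pi / (↑(m+m))) /
        (1 + a^2 - 2*a*Real.cos ((2*(k : ℝ)+1) * Real.pi / (↑(m+m)))) ^ ((3:ℝ)/2))
      (∑ k ∈ Finset.range (m+m),
        -(3*Real.cos ((2*(k:ℝ)+1) * Real.pi / (↑(m+m)))
            *(a-Real.cos ((2*(k:ℝ)+1) * Real.pi / (↑(m+m))))
            *Real.sqrt (1+a^2-2*a*Real.cos ((2*(k:ℝ)+1) * Real.pi / (↑(m+m)))))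
          / (1+a^2-2*a*Real.cos ((2*(k:ℝ)+1) * Real.pi / (↑(m+m))))^3) a := by
    intro a
    exact HasDerivAt.fun_sum
      (A := fun (k : ℕ) (x : ℝ) => Real.cos ((2*(k : ℝ)+1) * Real.pi / (↑(m+m))) /
        (1 + x^2 - 2*x*Real.cos ((2*(k : ℝ)+1) * Real.pi / (↑(m+m)))) ^ ((3:ℝ)/2))
      (fun k hk => hasDerivAt_term _ (hcsq k (Finset.mem_range.mp hk)) a)
  apply strictAntiOn_of_deriv_neg (convex_Ioi 1)
  · exact (Differentiable.continuous (fun a => (hder a).differentiableAt)).continuousOn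
  · intro a ha
    rw [interior_Ioi] at ha
    have ha1 : (1:ℝ) < a := ha
    rw [HasDerivAt.deriv (hder a)]
    have hm0 : (0:ℝ) < (m:ℝ) := by exact_mod_cast (by omega : 0 < m)
    have hcos : ∀ k : ℕ, Real.cos ((2*((m+k:ℕ):ℝ)+1) * Real.pi / (↑(m+m)))
        = -Real.cos ((2*(k:ℝ)+1) * Real.pi / (↑(m+m))) := by
      intro k
      have hmm0 : (m:ℝ)+(m:ℝ) ≠ 0 := by linarith
      have harg : (2*((m+k:ℕ):ℝ)+1) * Real.pi / (↑(m+m))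
          = (2*(k:ℝ)+1) * Real.pi / (↑(m+m)) + Real.pi := by
        push_cast
        field_simp
        ring
      rw [harg, Real.cos_add_pi]
    simp only [neg_div]
    rw [Finset.sum_neg_distrib, neg_lt_zero, Finset.sum_range_add,
      ← Finset.sum_add_distrib]
    refine Finset.sum_pos' (fun k hk => ?_) ⟨0, Finset.mem_range.mpr (by omega), ?_⟩
    · rw [hcos k]
      exact pairq ha1 (hcsq k (by have := Finset.mem_range.mp hk; omega))
    · rw [hcos 0]
      have h0 : (2*((0:ℕ):ℝ)+1) * Real.pi / (↑(m+m)) = Real.pi/((m:ℝ)+(m:ℝ)) := by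
        push_cast; ring
      have hc0 : 0 < Real.cos ((2*((0:ℕ):ℝ)+1) * Real.pi / (↑(m+m))) := by
        rw [h0]
        apply Real.cos_pos_of_mem_Ioo
        constructor
        · have h1 : 0 < Real.pi/((m:ℝ)+(m:ℝ)) := by positivity
          nlinarith [Real.pi_pos]
        · rw [div_lt_div_iff₀ (by linarith) (by norm_num : (0:ℝ) < 2)]
          have h4 : (4:ℝ) ≤ (m:ℝ)+(m:ℝ) := by exact_mod_cast (by omega : 4 ≤ m+m)
          nlinarith [Real.pi_pos, h4]
      have hc1 : Real.cos ((2*((0:ℕ):ℝ)+1) * Real.pi / (↑(m+m))) < 1 := by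
        nlinarith [hcsq 0 (by omega)]
      exact pairq_strict ha1 hc0 hc1
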